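/- Let Y be a finite set, φ: Y → ℝ^p, and q a probability distribution on Y with mean embedding μ_φ(q) = E_{Y∼q}[φ(Y)]. Let Ω: ℝ^p → ℝ ∪ {∞} be convex with φ(Y) ⊆ dom(Ω), and define the Fenchel-Young loss S_Ω(θ, u) = Ω*(θ) + Ω(u) − ⟨θ, u⟩. Then for all θ: E_{Y∼q}[S_Ω(θ, φ(Y))] = S_Ω(θ, μ_φ(q)) + (E_{Y∼q}[Ω(φ(Y))] − Ω(μ_φ(q))). In particular, since the second term does not depend on θ, the excess pointwise surrogate risk satisfies δs_Ω(θ, q) := E_{Y∼q}[S_Ω(θ, φ(Y))] − inf_{θ'} E_{Y∼q}[S_Ω(θ', φ(Y))] = S_Ω(θ, μ_φ(q)) − inf_{θ'} S_Ω(θ', μ_φ(q)). -/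
import Mathlib


open scoped RealInnerProductSpace

lemma my_iInf_add_const {ι : Type*} [Nonempty ι] (g : ι → ℝ)
    (hg : BddBelow (Set.range g)) (c : ℝ) :
    (⨅ i, g i + c) = (⨅ i, g i) + c := by
  apply le_antisymm
  · obtain ⟨b, hb⟩ := hg
    have hbdd : BddBelow (Set.range fun i => g i + c) := by
      refine ⟨b + c, ?_⟩
      rintro x ⟨i, rfl⟩
      exact add_le_add (hb ⟨i, rfl⟩) le_rfl
    have h : ∀ i, (⨅ i, g i + c) - c ≤ g i := fun i => by
      have := ciInf_le hbdd i
      linarith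
    have := le_ciInf h
    linarith
  · refine le_ciInf fun i => ?_
    exact add_le_add (ciInf_le hg i) le_rfl

/-- Pointwise surrogate risk of a Fenchel-Young loss: the expected loss
equals the loss at the mean embedding plus the (θ-independent) Bregman
information, and hence the excess pointwise surrogate risk equals the
excess Fenchel-Young loss at the mean embedding. -/
theorem fenchelYoung_pointwise_risk
    (p : ℕ) (Y : Type*) [Fintype Y] [Nonempty Y]
    (φ : Y → EuclideanSpace ℝ (Fin p)) (q : Y → ℝ)
    (hq0 : ∀ y, 0 ≤ q y) (hq1 : ∑ y, q y = 1)
    (D : Set (EuclideanSpace ℝ (Fin p))) (Ω : EuclideanSpace ℝ (Fin p) → ℝ)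
    (hconv : ConvexOn ℝ D Ω) (hφD : ∀ y, φ y ∈ D)
    (Ωstar : EuclideanSpace ℝ (Fin p) → ℝ)
    (hΩstar : ∀ θ, IsLUB ((fun u => ⟪u, θ⟫ - Ω u) '' D) (Ωstar θ)) :
    ∀ θ : EuclideanSpace ℝ (Fin p),
      (∑ y, q y * (Ωstar θ + Ω (φ y) - ⟪θ, φ y⟫))
        = (Ωstar θ + Ω (∑ y, q y • φ y) - ⟪θ, ∑ y, q y • φ y⟫)
          + ((∑ y, q y * Ω (φ y)) - Ω (∑ y, q y • φ y))
      ∧ (∑ y, q y * (Ωstar θ + Ω (φ y) - ⟪θ, φ y⟫))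
          - (⨅ θ' : EuclideanSpace ℝ (Fin p),
              ∑ y, q y * (Ωstar θ' + Ω (φ y) - ⟪θ', φ y⟫))
        = (Ωstar θ + Ω (∑ y, q y • φ y) - ⟪θ, ∑ y, q y • φ y⟫)
          - (⨅ θ' : EuclideanSpace ℝ (Fin p),
              Ωstar θ' + Ω (∑ y, q y • φ y) - ⟪θ', ∑ y, q y • φ y⟫) := by
  set μ := ∑ y, q y • φ y with hμdef
  have key : ∀ θ : EuclideanSpace ℝ (Fin p),
      (∑ y, q y * (Ωstar θ + Ω (φ y) - ⟪θ, φ y⟫))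
        = (Ωstar θ + Ω μ - ⟪θ, μ⟫) + ((∑ y, q y * Ω (φ y)) - Ω μ) := by
    intro θ
    have h1 : ⟪θ, μ⟫ = ∑ y, q y * ⟪θ, φ y⟫ := by
      rw [hμdef, inner_sum]
      exact Finset.sum_congr rfl fun y _ => real_inner_smul_right θ (φ y) (q y)
    have h2 : (∑ y, q y * (Ωstar θ + Ω (φ y) - ⟪θ, φ y⟫))
        = (∑ y, q y) * Ωstar θ + (∑ y, q y * Ω (φ y)) - ∑ y, q y * ⟪θ, φ y⟫ := by
      rw [Finset.sum_mul, ← Finset.sum_add_distrib, ← Finset.sum_sub_distrib]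
      exact Finset.sum_congr rfl fun y _ => by ring
    rw [h2, hq1, h1]; ring
  -- μ ∈ D
  have hμD : μ ∈ D := hconv.1.sum_mem (fun y _ => hq0 y) hq1 (fun y _ => hφD y)
  -- Fenchel-Young inequality at μ
  have hg0 : ∀ θ' : EuclideanSpace ℝ (Fin p),
      (0 : ℝ) ≤ Ωstar θ' + Ω μ - ⟪θ', μ⟫ := by
    intro θ'
    have := (hΩstar θ').1 ⟨μ, hμD, rfl⟩
    simp only at this
    have hc : ⟪μ, θ'⟫ = ⟪θ', μ⟫ := real_inner_comm θ' μ
    linarith [hc ▸ this]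
  intro θ
  refine ⟨key θ, ?_⟩
  have hbdd : BddBelow (Set.range fun θ' : EuclideanSpace ℝ (Fin p) =>
      Ωstar θ' + Ω μ - ⟪θ', μ⟫) := ⟨0, by rintro x ⟨θ', rfl⟩; exact hg0 θ'⟩
  have hiInf : (⨅ θ' : EuclideanSpace ℝ (Fin p),
      ∑ y, q y * (Ωstar θ' + Ω (φ y) - ⟪θ', φ y⟫))
      = (⨅ θ' : EuclideanSpace ℝ (Fin p), Ωstar θ' + Ω μ - ⟪θ', μ⟫)
        + ((∑ y, q y * Ω (φ y)) - Ω μ) := by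
    rw [← my_iInf_add_const _ hbdd]
    exact iInf_congr fun θ' => key θ'
  rw [key θ, hiInf]
  ring
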